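/- Let n be a positive integer and let b, d be real numbers with d > 0 and b > d + n - 1. Then for every real polynomial g of degree at most n - 1, ∫₀¹ z^{d-1} (1-z)^{b-d-n} ₂F₁(-n, b; d; z) g(z) dz = 0. -/

import Mathlib

/-- The Pochhammer symbol `(x)_k = x (x+1) ⋯ (x+k-1)` for a real number `x`. -/
noncomputable def poch (x : ℝ) (k : ℕ) : ℝ := ∏ i ∈ Finset.range k, (x + i)

/-- The terminating Gauss hypergeometric polynomial `₂F₁(-n, b; d; z)`
    as a real polynomial in `z`. -/
noncomputable def hypPoly (n : ℕ) (b d : ℝ) : Polynomial ℝ :=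
  ∑ k ∈ Finset.range (n + 1),
    Polynomial.C ((poch (-(n : ℝ)) k * poch b k) / (poch d k * (Nat.factorial k))) *
      Polynomial.X ^ k

lemma poch_zero (x : ℝ) : poch x 0 = 1 := by simp [poch]

lemma poch_succ (x : ℝ) (k : ℕ) : poch x (k + 1) = poch x k * (x + k) := by
  simp [poch, Finset.prod_range_succ]

lemma poch_succ' (x : ℝ) (k : ℕ) : poch x (k + 1) = x * poch (x + 1) k := by
  rw [poch, Finset.prod_range_succ']
  rw [mul_comm]
  simp only [Nat.cast_zero, add_zero]
  congr 1
  apply Finset.prod_congr rfl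
  intro i _
  push_cast
  ring

lemma poch_pos {x : ℝ} (hx : 0 < x) (k : ℕ) : 0 < poch x k :=
  Finset.prod_pos fun i _ => by positivity

lemma poch_neg_nat {n k : ℕ} (h : n < k) : poch (-(n : ℝ)) k = 0 :=
  Finset.prod_eq_zero (Finset.mem_range.2 h) (by simp)

lemma hypPoly_coeff (n : ℕ) (b d : ℝ) (j : ℕ) :
    (hypPoly n b d).coeff j = poch (-(n : ℝ)) j * poch b j / (poch d j * (Nat.factorial j)) := by
  unfold hypPoly
  rw [Polynomial.finset_sum_coeff]
  simp only [Polynomial.coeff_C_mul, Polynomial.coeff_X_pow, mul_ite, mul_one, mul_zero]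
  rw [Finset.sum_ite_eq (Finset.range (n + 1)) j]
  split
  · rfl
  · rename_i h
    rw [poch_neg_nat (by simpa using h)]
    simp

lemma key_rec (m k : ℕ) (b d : ℝ) (hd : 0 < d) :
    (d + k + 1) * (hypPoly m (b + 1) (d + 1)).coeff (k + 1)
      - (b - m + k) * (hypPoly m (b + 1) (d + 1)).coeff k
    = d * (hypPoly (m + 1) b d).coeff (k + 1) := by
  rw [hypPoly_coeff, hypPoly_coeff, hypPoly_coeff]
  have hm1 : (-(((m : ℕ) + 1 : ℕ) : ℝ)) = (-(m : ℝ) - 1) := by push_cast; ring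
  have hm2 : (-(m : ℝ) - 1) + 1 = -(m : ℝ) := by ring
  have h4 : poch (-(((m : ℕ) + 1 : ℕ) : ℝ)) (k + 1) = (-(m : ℝ) - 1) * poch (-(m : ℝ)) k := by
    rw [hm1, poch_succ', hm2]
  rw [poch_succ (-(m : ℝ)) k, poch_succ (b + 1) k, poch_succ (d + 1) k, h4,
    poch_succ' b k, poch_succ' d k, Nat.factorial_succ]
  have hp : poch (d + 1) k ≠ 0 := (poch_pos (by linarith) k).ne'
  have hf : (Nat.factorial k : ℝ) ≠ 0 := Nat.cast_ne_zero.mpr (Nat.factorial_ne_zero k)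
  have hk1 : ((k : ℝ) + 1) ≠ 0 := by positivity
  push_cast
  field_simp
  ring

lemma aux_sq (A : Polynomial ℝ) (k : ℕ) :
    (Polynomial.X * A.derivative).coeff k = k * A.coeff k := by
  cases k with
  | zero => simp
  | succ i => rw [Polynomial.coeff_X_mul, Polynomial.coeff_derivative]; push_cast; ring

lemma key_poly (m : ℕ) (b d : ℝ) (hd : 0 < d) :
    Polynomial.C d * hypPoly (m + 1) b d =
      Polynomial.C d * hypPoly m (b + 1) (d + 1)
        - Polynomial.C d * (Polynomial.X * hypPoly m (b + 1) (d + 1))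
        - Polynomial.C (b - d - m) * (Polynomial.X * hypPoly m (b + 1) (d + 1))
        + Polynomial.X * (hypPoly m (b + 1) (d + 1)).derivative
        - Polynomial.X * (Polynomial.X * (hypPoly m (b + 1) (d + 1)).derivative) := by
  ext j
  cases j with
  | zero =>
    simp only [Polynomial.coeff_C_mul, Polynomial.coeff_sub, Polynomial.coeff_add,
      Polynomial.mul_coeff_zero, Polynomial.coeff_X_zero, zero_mul, mul_zero,
      sub_zero, add_zero]
    rw [hypPoly_coeff, hypPoly_coeff]
    simp [poch_zero]
  | succ k =>
    simp only [Polynomial.coeff_C_mul, Polynomial.coeff_sub, Polynomial.coeff_add,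
      Polynomial.coeff_X_mul, Polynomial.coeff_derivative, aux_sq]
    linear_combination - key_rec m k b d hd

open Polynomial intervalIntegral MeasureTheory in
/-- integrability of the beta-type integrand times a continuous function -/
lemma betaInt {p q : ℝ} (hp : -1 < p) (hq : -1 < q) (f : ℝ → ℝ) (hf : Continuous f) :
    IntervalIntegrable (fun z => z ^ p * (1 - z) ^ q * f z) volume 0 1 := by
  have half : ∀ (p q : ℝ), -1 < p → ∀ f : ℝ → ℝ, Continuous f →
      IntervalIntegrable (fun z => z ^ p * ((1 - z) ^ q * f z)) volume 0 (1/2) := by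
    intro p q hp f hf
    apply (intervalIntegrable_rpow' hp).mul_continuousOn
    apply ContinuousOn.mul _ hf.continuousOn
    apply continuousOn_of_forall_continuousAt
    intro x hx
    rw [Set.uIcc_of_le (by norm_num : (0:ℝ) ≤ 1/2)] at hx
    have : (1 : ℝ) - x ≠ 0 := by have := hx.2; intro h; nlinarith [hx.1]
    exact ((continuous_const.sub continuous_id).continuousAt).rpow_const (Or.inl this)
  have L : IntervalIntegrable (fun z => z ^ p * ((1 - z) ^ q * f z)) volume 0 (1/2) :=
    half p q hp f hf
  have R0 : IntervalIntegrable (fun z => z ^ q * ((1 - z) ^ p * f (1 - z))) volume 0 (1/2) :=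
    half q p hq _ (hf.comp (continuous_const.sub continuous_id))
  have R1 := (R0.comp_sub_left 1).symm
  norm_num at R1
  have hfun : (fun x : ℝ => (1 - x) ^ q * (x ^ p * f x))
      = fun z => z ^ p * ((1 - z) ^ q * f z) := by
    funext x
    ring
  rw [hfun] at R1
  have := L.trans R1
  simpa [mul_assoc] using this

lemma hasDeriv_key (m : ℕ) (b d : ℝ) (hd : 0 < d) {z : ℝ} (hz0 : 0 < z) (hz1 : z < 1) :
    HasDerivAt (fun t => t ^ d * (1 - t) ^ (b - d - (m : ℝ)) * (hypPoly m (b + 1) (d + 1)).eval t)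
      (z ^ (d - 1) * (1 - z) ^ (b - d - (m : ℝ) - 1) * (d * (hypPoly (m + 1) b d).eval z)) z := by
  have h1 : HasDerivAt (fun t : ℝ => t ^ d) (d * z ^ (d - 1)) z :=
    Real.hasDerivAt_rpow_const (Or.inl hz0.ne')
  have hone : (1 : ℝ) - z ≠ 0 := by intro h; linarith [h]
  have h2 : HasDerivAt (fun t : ℝ => (1 - t) ^ (b - d - (m : ℝ)))
      ((-1) * (b - d - (m : ℝ)) * (1 - z) ^ (b - d - (m : ℝ) - 1)) z :=
    ((hasDerivAt_id z).const_sub 1).rpow_const (Or.inl hone)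
  have h3 := (hypPoly m (b + 1) (d + 1)).hasDerivAt z
  have h := (h1.mul h2).mul h3
  convert h using 1
  iterate 3 rfl
  simp only [Pi.mul_apply]
  have e1 : z ^ d = z ^ (d - 1) * z := by
    rw [← Real.rpow_add_one hz0.ne' (d - 1)]; norm_num
  have e2 : (1 - z) ^ (b - d - (m : ℝ)) = (1 - z) ^ (b - d - (m : ℝ) - 1) * (1 - z) := by
    rw [← Real.rpow_add_one hone (b - d - (m : ℝ) - 1)]; norm_num
  have hk := congrArg (Polynomial.eval z) (key_poly m b d hd)
  simp only [Polynomial.eval_mul, Polynomial.eval_add, Polynomial.eval_sub, Polynomial.eval_C,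
    Polynomial.eval_X] at hk
  rw [e1, e2]
  linear_combination (z ^ (d - 1) * (1 - z) ^ (b - d - (m : ℝ) - 1)) * hk

lemma main_orth : ∀ (n : ℕ), 0 < n → ∀ b d : ℝ, 0 < d → b > d + (n : ℝ) - 1 →
    ∀ g : Polynomial ℝ, g.natDegree < n →
    (∫ z in (0 : ℝ)..1,
      z ^ (d - 1) * (1 - z) ^ (b - d - (n : ℝ)) * (hypPoly n b d).eval z * g.eval z) = 0 := by
  intro n
  induction n with
  | zero => intro h; exact absurd h (lt_irrefl 0)
  | succ m IH =>
    intro _ b d hd hb g hg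
    have hb' : b > d + (m : ℝ) := by push_cast at hb; linarith
    have hβ : 0 < b - d - (m : ℝ) := by linarith
    set P := hypPoly m (b + 1) (d + 1) with hP
    set Q := hypPoly (m + 1) b d with hQ
    set w1 : ℝ → ℝ := fun z =>
      z ^ (d - 1) * (1 - z) ^ (b - d - (m : ℝ) - 1) * (d * Q.eval z * g.eval z) with hw1
    set w2 : ℝ → ℝ := fun z =>
      z ^ d * (1 - z) ^ (b - d - (m : ℝ)) * (P.eval z * g.derivative.eval z) with hw2
    have hder : ∀ z ∈ Set.Ioo (0 : ℝ) 1, HasDerivAt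
        (fun t => t ^ d * (1 - t) ^ (b - d - (m : ℝ)) * P.eval t * g.eval t)
        (w1 z + w2 z) z := by
      intro z hz
      have h1 := (hasDeriv_key m b d hd hz.1 hz.2).mul (g.hasDerivAt z)
      have hfun : (fun t : ℝ => t ^ d * (1 - t) ^ (b - d - (m : ℝ)) * P.eval t * g.eval t)
          = fun y => (fun t => t ^ d * (1 - t) ^ (b - d - (m : ℝ)) * P.eval t) y * g.eval y := by
        funext t; ring
      rw [hfun]
      convert h1 using 1
      iterate 3 rfl
      simp only [hw1, hw2]
      ring
    have hcont : Continuous (fun t : ℝ => t ^ d * (1 - t) ^ (b - d - (m : ℝ)) * P.eval t * g.eval t) := by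
      have c1 : Continuous (fun t : ℝ => t ^ d) := Real.continuous_rpow_const hd.le
      have c2 : Continuous (fun t : ℝ => (1 - t) ^ (b - d - (m : ℝ))) :=
        (Real.continuous_rpow_const hβ.le).comp (continuous_const.sub continuous_id)
      exact ((c1.mul c2).mul P.continuous).mul g.continuous
    have int1 : IntervalIntegrable w1 MeasureTheory.volume 0 1 := by
      exact betaInt (by linarith) (by linarith) _
        ((continuous_const.mul Q.continuous).mul g.continuous)
    have int2 : IntervalIntegrable w2 MeasureTheory.volume 0 1 := by
      exact betaInt (by linarith) (by linarith) _
        (P.continuous.mul g.derivative.continuous)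
    have hFTC := intervalIntegral.integral_eq_sub_of_hasDerivAt_of_le (by norm_num)
      hcont.continuousOn hder (int1.add int2)
    rw [intervalIntegral.integral_add int1 int2] at hFTC
    have hend : (1 : ℝ) ^ d * (1 - 1 : ℝ) ^ (b - d - (m : ℝ)) * P.eval 1 * g.eval 1
        - ((0 : ℝ) ^ d * (1 - 0 : ℝ) ^ (b - d - (m : ℝ)) * P.eval 0 * g.eval 0) = 0 := by
      rw [sub_self, Real.zero_rpow hβ.ne', Real.zero_rpow hd.ne']
      ring
    rw [hend] at hFTC
    have hI2 : (∫ z in (0 : ℝ)..1, w2 z) = 0 := by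
      by_cases hm : m = 0
      · have hg0 : g.natDegree = 0 := by omega
        have : g.derivative = 0 := Polynomial.derivative_of_natDegree_zero hg0
        simp [hw2, this]
      · have hm' : 0 < m := Nat.pos_of_ne_zero hm
        have hdeg : g.derivative.natDegree < m :=
          lt_of_le_of_lt (Polynomial.natDegree_derivative_le g) (by omega)
        have hIH := IH hm' (b + 1) (d + 1) (by linarith)
          (by linarith) g.derivative hdeg
        simp only [show (d : ℝ) + 1 - 1 = d by ring,
          show (b : ℝ) + 1 - (d + 1) - (m : ℝ) = b - d - (m : ℝ) by ring] at hIH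
        have heq : (∫ z in (0 : ℝ)..1, w2 z)
            = ∫ z in (0 : ℝ)..1, z ^ d * (1 - z) ^ (b - d - (m : ℝ)) *
                (hypPoly m (b + 1) (d + 1)).eval z * (Polynomial.derivative g).eval z := by
          apply intervalIntegral.integral_congr
          intro z _
          simp only [hw2, hP]
          ring
        rw [heq, hIH]
    have hI1 : (∫ z in (0 : ℝ)..1, w1 z)
        = d * ∫ z in (0 : ℝ)..1,
            z ^ (d - 1) * (1 - z) ^ (b - d - (m : ℝ) - 1) * Q.eval z * g.eval z := by
      rw [← intervalIntegral.integral_const_mul]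
      apply intervalIntegral.integral_congr
      intro z _
      simp only [hw1]
      ring
    rw [hI2, add_zero, hI1] at hFTC
    have := (mul_eq_zero.mp hFTC).resolve_left hd.ne'
    have hcast : b - d - ((m : ℝ) + 1) = b - d - (m : ℝ) - 1 := by ring
    push_cast
    rw [hcast]
    exact this

/-- For `d > 0` and `b > d + n - 1`, the polynomial `₂F₁(-n, b; d; z)` is orthogonal on
`(0, 1)` with respect to the weight `z^(d-1) (1-z)^(b-d-n)` to every real polynomial `g`
of degree at most `n - 1`. -/
theorem hyp_orthogonality_unit_interval (n : ℕ) (hn : 0 < n) (b d : ℝ)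
    (hd : 0 < d) (hb : b > d + n - 1) (g : Polynomial ℝ) (hg : g.natDegree < n) :
    ∫ z in (0 : ℝ)..1,
      Real.rpow z (d - 1) * Real.rpow (1 - z) (b - d - n) *
        (hypPoly n b d).eval z * g.eval z = 0 :=
  main_orth n hn b d hd hb g hg
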